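/- In U_q(sl3), F_2 \hat{F}_3[a] = \hat{F}_3[a+1] F_2. -/

import Mathlib

noncomputable section

/-- The defining relations of `U_q(sl3)` inside an `ℝ`-algebra `R`:
generators `E₁ E₂ F₁ F₂` and `K₁ K₂` with inverses `K₁' K₂'`. -/
structure UqSL3 (R : Type*) [Ring R] [Algebra ℝ R] (q : ℝ)
    (E₁ E₂ F₁ F₂ K₁ K₁' K₂ K₂' : R) : Prop where
  K₁mul : K₁ * K₁' = 1
  K₁mul' : K₁' * K₁ = 1
  K₂mul : K₂ * K₂' = 1
  K₂mul' : K₂' * K₂ = 1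
  Kcomm : K₁ * K₂ = K₂ * K₁
  Kcomm' : K₁ * K₂' = K₂' * K₁
  Kcomm'' : K₁' * K₂ = K₂ * K₁'
  KE11 : K₁ * E₁ = (q ^ (2:ℤ)) • (E₁ * K₁)
  KE12 : K₁ * E₂ = (q ^ (-1:ℤ)) • (E₂ * K₁)
  KE21 : K₂ * E₁ = (q ^ (-1:ℤ)) • (E₁ * K₂)
  KE22 : K₂ * E₂ = (q ^ (2:ℤ)) • (E₂ * K₂)
  KF11 : K₁ * F₁ = (q ^ (-2:ℤ)) • (F₁ * K₁)
  KF12 : K₁ * F₂ = (q ^ (1:ℤ)) • (F₂ * K₁)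
  KF21 : K₂ * F₁ = (q ^ (1:ℤ)) • (F₁ * K₂)
  KF22 : K₂ * F₂ = (q ^ (-2:ℤ)) • (F₂ * K₂)
  EF11 : E₁ * F₁ - F₁ * E₁ = (q - q⁻¹)⁻¹ • (K₁ - K₁')
  EF22 : E₂ * F₂ - F₂ * E₂ = (q - q⁻¹)⁻¹ • (K₂ - K₂')
  EF12 : E₁ * F₂ = F₂ * E₁
  EF21 : E₂ * F₁ = F₁ * E₂
  serreE₁ : E₁ ^ 2 * E₂ - (q + q⁻¹) • (E₁ * E₂ * E₁) + E₂ * E₁ ^ 2 = 0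
  serreE₂ : E₂ ^ 2 * E₁ - (q + q⁻¹) • (E₂ * E₁ * E₂) + E₁ * E₂ ^ 2 = 0
  serreF₁ : F₁ ^ 2 * F₂ - (q + q⁻¹) • (F₁ * F₂ * F₁) + F₂ * F₁ ^ 2 = 0
  serreF₂ : F₂ ^ 2 * F₁ - (q + q⁻¹) • (F₂ * F₁ * F₂) + F₁ * F₂ ^ 2 = 0

/-- `F̂₃[a] = F₁F₂ (q^{a+1}K₂ - q^{-a-1}K₂⁻¹)/(q-q⁻¹) - F₂F₁ (q^a K₂ - q^{-a}K₂⁻¹)/(q-q⁻¹)`. -/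
def hatF₃ {R : Type*} [Ring R] [Algebra ℝ R] (q a : ℝ) (F₁ F₂ K₂ K₂' : R) : R :=
  (q - q⁻¹)⁻¹ • (F₁ * F₂ * (q ^ (a + 1) • K₂ - q ^ (-(a + 1)) • K₂')
    - F₂ * F₁ * (q ^ a • K₂ - q ^ (-a) • K₂'))
theorem stmt {R : Type*} [Ring R] [Algebra ℝ R] (q : ℝ) (hq0 : 0 < q) (hq1 : q < 1)
    (E₁ E₂ F₁ F₂ K₁ K₁' K₂ K₂' : R)
    (h : UqSL3 R q E₁ E₂ F₁ F₂ K₁ K₁' K₂ K₂') (a : ℝ) :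
    F₂ * hatF₃ q a F₁ F₂ K₂ K₂' = hatF₃ q (a + 1) F₁ F₂ K₂ K₂' * F₂ := by
  have hq : q ≠ 0 := hq0.ne'
  have hK : K₂ * F₂ = (q ^ (-2:ℤ)) • (F₂ * K₂) := h.KF22
  have h1 : F₂ * K₂' = (q ^ (-2:ℤ)) • (K₂' * F₂) := by
    calc F₂ * K₂' = K₂' * (K₂ * F₂) * K₂' := by
          rw [← mul_assoc, h.K₂mul', one_mul]
      _ = (q ^ (-2:ℤ)) • (K₂' * F₂) := by
          rw [hK, mul_smul_comm, smul_mul_assoc, mul_assoc, mul_assoc, h.K₂mul, mul_one]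
  have hK' : K₂' * F₂ = (q ^ (2:ℤ)) • (F₂ * K₂') := by
    rw [h1, smul_smul, ← zpow_add₀ hq]
    norm_num
  have hS : F₂ ^ 2 * F₁ + F₁ * F₂ ^ 2 = (q + q⁻¹) • (F₂ * F₁ * F₂) := by
    have h0 := h.serreF₂
    rwa [sub_add_eq_add_sub, sub_eq_zero] at h0
  have hS2 : ∀ X : R, F₁ * (F₂ * (F₂ * X))
      = (q + q⁻¹) • (F₂ * (F₁ * (F₂ * X))) - F₂ * (F₂ * (F₁ * X)) := by
    intro X
    have := congrArg (· * X) hS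
    simp only [add_mul, smul_mul_assoc] at this
    rw [eq_sub_iff_add_eq]
    calc F₁ * (F₂ * (F₂ * X)) + F₂ * (F₂ * (F₁ * X))
        = F₂ ^ 2 * F₁ * X + F₁ * F₂ ^ 2 * X := by noncomm_ring
      _ = (q + q⁻¹) • (F₂ * F₁ * F₂ * X) := this
      _ = (q + q⁻¹) • (F₂ * (F₁ * (F₂ * X))) := by noncomm_ring
  rw [zpow_neg, zpow_two] at hK
  rw [zpow_two] at hK'
  unfold hatF₃
  rw [mul_smul_comm, smul_mul_assoc]
  congr 1
  simp only [mul_sub, sub_mul, mul_smul_comm, smul_mul_assoc, mul_assoc, hK, hK',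
    smul_smul, hS2]
  match_scalars <;>
    · simp only [Real.rpow_neg hq0.le, Real.rpow_add hq0, Real.rpow_one]
      field_simp
      all_goals ring
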